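/- arXiv:1409.8234 — 3 statements merged into one kernel-verified Lean document; each statement's English description precedes it below -/
import Mathlib

section
/- Let g : ℤ → ℂ be a function supported on a finite set S ⊆ ℤ, and let H ⊆ ℤ be a finite nonempty set. For h ∈ ℤ let r_H(h) denote the number of pairs (h₁, h₂) ∈ H × H with h₁ - h₂ = h. Then |∑_y g(y)|² ≤ (|S - H| / |H|²) · ∑_h r_H(h) · ∑_y g(y+h) · conj(g(y)), where S - H denotes the difference set {s - h : s ∈ S, h ∈ H}. -/
open Finset Pointwise

/-- van der Corput's inequality. -/
theorem vdc_inequality (g : ℤ → ℂ) (S H : Finset ℤ)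
    (hg : ∀ y ∉ S, g y = 0) (hH : H.Nonempty) :
    ‖∑ y ∈ S, g y‖ ^ 2 ≤
      ((S - H).card : ℝ) / ((H.card : ℝ) ^ 2) *
        (∑ h ∈ H - H,
          (((H ×ˢ H).filter (fun p => p.1 - p.2 = h)).card : ℝ) *
            (∑ y ∈ S, g (y + h) * (starRingEnd ℂ) (g y)).re) := by
  set T := S - H with hT
  set A := ∑ y ∈ S, g y with hA
  have hsubset : ∀ h : ℤ, h ∈ H → S ⊆ T.image (· + h) := by
    intro h hh z hz
    refine Finset.mem_image.2 ⟨z - h, ?_, by ring⟩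
    exact Finset.sub_mem_sub hz hh
  have hinj : ∀ h : ℤ, Set.InjOn (· + h) (T : Set ℤ) := by
    intro h a _ b _ hab
    simpa using hab
  -- shift lemma for single g
  have shift1 : ∀ h ∈ H, ∑ y ∈ T, g (y + h) = A := by
    intro h hh
    have h1 : ∑ z ∈ T.image (· + h), g z = ∑ y ∈ T, g (y + h) :=
      Finset.sum_image fun a ha b hb hab => by
        exact hinj h (by exact_mod_cast ha) (by exact_mod_cast hb) hab
    have h2 : ∑ z ∈ S, g z = ∑ z ∈ T.image (· + h), g z :=
      Finset.sum_subset (hsubset h hh) (fun z _ hz => hg z hz)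
    rw [← h1, ← h2]
  -- shift lemma for products
  have key : ∀ h₁ h₂ : ℤ, h₂ ∈ H →
      ∑ y ∈ T, g (y + h₁) * (starRingEnd ℂ) (g (y + h₂))
        = ∑ z ∈ S, g (z + (h₁ - h₂)) * (starRingEnd ℂ) (g z) := by
    intro h₁ h₂ hh₂
    have h1 : ∑ z ∈ T.image (· + h₂), g (z + (h₁ - h₂)) * (starRingEnd ℂ) (g z)
        = ∑ y ∈ T, g (y + h₂ + (h₁ - h₂)) * (starRingEnd ℂ) (g (y + h₂)) :=
      Finset.sum_image fun a ha b hb hab =>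
        hinj h₂ (by exact_mod_cast ha) (by exact_mod_cast hb) hab
    have h2 : ∑ z ∈ S, g (z + (h₁ - h₂)) * (starRingEnd ℂ) (g z)
        = ∑ z ∈ T.image (· + h₂), g (z + (h₁ - h₂)) * (starRingEnd ℂ) (g z) :=
      Finset.sum_subset (hsubset h₂ hh₂) (fun z _ hz => by simp [hg z hz])
    rw [h2, h1]
    refine Finset.sum_congr rfl fun y _ => ?_
    congr 2
    ring
  set F : ℤ → ℂ := fun y => ∑ h ∈ H, g (y + h) with hF
  have hB : ∑ y ∈ T, F y = (H.card : ℂ) * A := by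
    rw [Finset.sum_comm]
    rw [Finset.sum_congr rfl shift1, Finset.sum_const, nsmul_eq_mul]
  -- expansion
  have hD : ∑ y ∈ T, Complex.normSq (F y)
      = ∑ h ∈ H - H,
          (((H ×ˢ H).filter (fun p => p.1 - p.2 = h)).card : ℝ) *
            (∑ y ∈ S, g (y + h) * (starRingEnd ℂ) (g y)).re := by
    have e1 : ∀ y : ℤ, (Complex.normSq (F y) : ℝ) = (F y * (starRingEnd ℂ) (F y)).re := by
      intro y
      rw [Complex.mul_conj]
      simp
    have e2 : ∀ y : ℤ, F y * (starRingEnd ℂ) (F y)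
        = ∑ p ∈ H ×ˢ H, g (y + p.1) * (starRingEnd ℂ) (g (y + p.2)) := by
      intro y
      rw [hF]
      simp only [map_sum, Finset.sum_mul_sum]
      rw [Finset.sum_product]
    calc ∑ y ∈ T, Complex.normSq (F y)
        = (∑ y ∈ T, ∑ p ∈ H ×ˢ H, g (y + p.1) * (starRingEnd ℂ) (g (y + p.2))).re := by
          rw [Complex.re_sum]
          exact Finset.sum_congr rfl fun y _ => by rw [e1, e2]
      _ = (∑ p ∈ H ×ˢ H, ∑ z ∈ S, g (z + (p.1 - p.2)) * (starRingEnd ℂ) (g z)).re := by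
          rw [Finset.sum_comm]
          congr 1
          exact Finset.sum_congr rfl fun p hp => key p.1 p.2 (Finset.mem_product.1 hp).2
      _ = (∑ h ∈ H - H, ∑ p ∈ (H ×ˢ H).filter (fun p => p.1 - p.2 = h),
            ∑ z ∈ S, g (z + (p.1 - p.2)) * (starRingEnd ℂ) (g z)).re := by
          rw [Finset.sum_fiberwise_of_maps_to]
          intro p hp
          exact Finset.sub_mem_sub (Finset.mem_product.1 hp).1 (Finset.mem_product.1 hp).2
      _ = _ := by
          rw [Complex.re_sum]
          refine Finset.sum_congr rfl fun h hh => ?_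
          have : ∑ p ∈ (H ×ˢ H).filter (fun p => p.1 - p.2 = h),
              ∑ z ∈ S, g (z + (p.1 - p.2)) * (starRingEnd ℂ) (g z)
              = (((H ×ˢ H).filter (fun p => p.1 - p.2 = h)).card : ℂ) *
                ∑ z ∈ S, g (z + h) * (starRingEnd ℂ) (g z) := by
            rw [Finset.sum_congr rfl (fun p hp => by
              rw [(Finset.mem_filter.1 hp).2]), Finset.sum_const, nsmul_eq_mul]
          rw [this]
          simp
  -- Cauchy-Schwarz
  have hCS : ‖∑ y ∈ T, F y‖ ^ 2 ≤ (T.card : ℝ) * ∑ y ∈ T, Complex.normSq (F y) := by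
    calc ‖∑ y ∈ T, F y‖ ^ 2 ≤ (∑ y ∈ T, ‖F y‖) ^ 2 := by
          have h0 := norm_sum_le T F
          have : ‖∑ y ∈ T, F y‖ ≤ ∑ y ∈ T, ‖F y‖ := by
            simpa using h0
          exact pow_le_pow_left₀ (norm_nonneg _) this 2
      _ ≤ (T.card : ℝ) * ∑ y ∈ T, ‖F y‖ ^ 2 := sq_sum_le_card_mul_sum_sq
      _ = (T.card : ℝ) * ∑ y ∈ T, Complex.normSq (F y) := by
          congr 1
          exact Finset.sum_congr rfl fun y _ => Complex.sq_norm (F y)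
  have hcard : (0 : ℝ) < (H.card : ℝ) := by exact_mod_cast hH.card_pos
  have hcardsq : (0 : ℝ) < (H.card : ℝ) ^ 2 := by positivity
  rw [div_mul_eq_mul_div, le_div_iff₀ hcardsq]
  have hLHS : ‖∑ y ∈ T, F y‖ ^ 2 = ‖A‖ ^ 2 * (H.card : ℝ) ^ 2 := by
    rw [hB, norm_mul]
    simp [mul_pow]
    ring
  rw [← hLHS, ← hD]
  exact hCS
end

section
/- Let g₀, g₁, g₂ : ℤ → ℝ be functions supported on [-N, N] with values in [-1,1], and let a = (a₀, a₁) ∈ ℤ² with a₀ ≠ 0 and a₁ ≠ 0. Then |∑_{z₀,z₁ ∈ ℤ} g₀(z₀)·g₁(z₁)·g₂(a₀z₀ + a₁z₁)| ≤ C · N^{5/4} · ‖g₂‖_{U²} for an absolute constant C, where ‖f‖_{U²}⁴ = ∑_{h₁,h₂,x} f(x)f(x+h₁)f(x+h₂)f(x+h₁+h₂). -/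
set_option maxHeartbeats 1000000

open Finset Pointwise

/-- The multiplicative difference operator `Δ_h f (x) = f (x + h) * f x`. -/
noncomputable def deltaOp (h : ℤ) (f : ℤ → ℝ) : ℤ → ℝ := fun x => f (x + h) * f x

/-- `gowersSum d f = ‖f‖_{U^d}^{2^d} = ∑_{h₁,…,h_d} ∑_x Δ_{h₁} ⋯ Δ_{h_d} f (x)`. -/
noncomputable def gowersSum : ℕ → (ℤ → ℝ) → ℝ
  | 0, f => ∑ᶠ x : ℤ, f x
  | d + 1, f => ∑ᶠ h : ℤ, gowersSum d (deltaOp h f)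

lemma gowersSum_one_eq (u : ℤ → ℝ) (T : Finset ℤ) (hu : ∀ x, x ∉ T → u x = 0) :
    gowersSum 1 u = (∑ x ∈ T, u x) ^ 2 := by
  have h0 : gowersSum 1 u = ∑ᶠ h : ℤ, ∑ᶠ x : ℤ, u (x + h) * u x := by
    simp [gowersSum, deltaOp]
  have hinner : ∀ h : ℤ, ∑ᶠ x : ℤ, u (x + h) * u x = ∑ x ∈ T, u (x + h) * u x := by
    intro h
    apply finsum_eq_finset_sum_of_support_subset
    intro x hx
    simp only [Function.mem_support] at hx
    by_contra hxT
    exact hx (by rw [hu x hxT, mul_zero])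
  rw [h0]
  simp_rw [hinner]
  have houter : Function.support (fun h : ℤ => ∑ x ∈ T, u (x + h) * u x) ⊆ ((T - T : Finset ℤ) : Set ℤ) := by
    intro h hh
    simp only [Function.mem_support] at hh
    obtain ⟨x, hxT, hx⟩ := Finset.exists_ne_zero_of_sum_ne_zero hh
    have hx1 : u (x + h) ≠ 0 := fun h0 => hx (by rw [h0, zero_mul])
    have hx2 : x + h ∈ T := by by_contra hc; exact hx1 (hu _ hc)
    simp only [Finset.mem_coe]
    exact Finset.mem_sub.2 ⟨x + h, hx2, x, hxT, by ring⟩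
  rw [finsum_eq_finset_sum_of_support_subset _ houter]
  rw [Finset.sum_comm]
  have hxterm : ∀ x ∈ T, ∑ h ∈ T - T, u (x + h) * u x = u x * ∑ y ∈ T, u y := by
    intro x hxT
    by_cases hux : u x = 0
    · simp [hux]
    · have h1 : ∑ h ∈ T - T, u (x + h) * u x = (∑ h ∈ T - T, u (x + h)) * u x := by
        rw [Finset.sum_mul]
      have h2 : ∑ h ∈ T - T, u (x + h) = ∑ y ∈ (T - T).image (fun h => x + h), u y := by
        rw [Finset.sum_image]
        intro a _ b _ hab
        exact add_left_cancel hab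
      have h3 : ∑ y ∈ (T - T).image (fun h => x + h), u y = ∑ y ∈ T, u y := by
        symm
        apply Finset.sum_subset
        · intro y hyT
          exact Finset.mem_image.2 ⟨y - x, Finset.mem_sub.2 ⟨y, hyT, x, hxT, rfl⟩, by ring⟩
        · intro y _ hyT
          exact hu y hyT
      rw [h1, h2, h3, mul_comm]
  rw [Finset.sum_congr rfl hxterm, ← Finset.sum_mul, sq]

lemma gowersSum_two_partial (f : ℤ → ℝ) (T : Finset ℤ) (hf : ∀ x, x ∉ T → f x = 0)
    (M : Finset ℤ) :
    ∑ m ∈ M, (∑ x ∈ T, f (x + m) * f x) ^ 2 ≤ gowersSum 2 f := by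
  have h2 : gowersSum 2 f = ∑ᶠ h : ℤ, (∑ x ∈ T, f (x + h) * f x) ^ 2 := by
    show (∑ᶠ h : ℤ, gowersSum 1 (deltaOp h f)) = _
    refine finsum_congr fun h => ?_
    rw [gowersSum_one_eq (deltaOp h f) T (fun x hx => by simp [deltaOp, hf x hx])]
    rfl
  have hsupp : Function.support (fun h : ℤ => (∑ x ∈ T, f (x + h) * f x) ^ 2)
      ⊆ ((M ∪ (T - T) : Finset ℤ) : Set ℤ) := by
    intro h hh
    simp only [Function.mem_support] at hh
    have hh' : ∑ x ∈ T, f (x + h) * f x ≠ 0 := fun h0 => hh (by rw [h0]; ring)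
    obtain ⟨x, hxT, hx⟩ := Finset.exists_ne_zero_of_sum_ne_zero hh'
    have hx1 : f (x + h) ≠ 0 := fun h0 => hx (by rw [h0, zero_mul])
    have hx2 : x + h ∈ T := by by_contra hc; exact hx1 (hf _ hc)
    simp only [Finset.coe_union, Set.mem_union, Finset.mem_coe]
    exact Or.inr (Finset.mem_sub.2 ⟨x + h, hx2, x, hxT, by ring⟩)
  rw [h2, finsum_eq_finset_sum_of_support_subset _ hsupp]
  exact Finset.sum_le_sum_of_subset_of_nonneg Finset.subset_union_left
    (fun i _ _ => sq_nonneg _)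

lemma gowersSum_two_nonneg (f : ℤ → ℝ) (T : Finset ℤ) (hf : ∀ x, x ∉ T → f x = 0) :
    0 ≤ gowersSum 2 f := by
  simpa using gowersSum_two_partial f T hf ∅

lemma key_lemma (f : ℤ → ℝ) (T : Finset ℤ) (hf : ∀ x, x ∉ T → f x = 0)
    (a v : ℤ) (ha : a ≠ 0) (J : Finset ℤ) (hJ : ∀ z : ℤ, a * z + v ∈ T → z ∈ J)
    (M : Finset ℤ) :
    ∑ m ∈ M, (∑ z ∈ J, f (a * z + v) * f (a * z + v + m)) ^ 2 ≤ gowersSum 2 f := by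
  set c : ℤ → ℝ := fun d => ∑ x ∈ T, f (x + d) * f x with hc
  set D : ℤ → ℝ := fun m => ∑ z ∈ J, f (a * z + v) * f (a * z + v + m) with hD
  set M' : Finset ℤ := M ∪ (T - T) with hM'
  have h0 : ∑ m ∈ M, (D m) ^ 2 ≤ ∑ m ∈ M', (D m) ^ 2 :=
    Finset.sum_le_sum_of_subset_of_nonneg Finset.subset_union_left (fun _ _ _ => sq_nonneg _)
  have hDsupp : ∀ m : ℤ, m ∉ (T - T : Finset ℤ) → D m = 0 := by
    intro m hm
    apply Finset.sum_eq_zero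
    intro z _
    by_cases h1 : f (a * z + v) = 0
    · rw [h1, zero_mul]
    by_cases h2 : f (a * z + v + m) = 0
    · rw [h2, mul_zero]
    exfalso
    have t1 : a * z + v ∈ T := by by_contra hq; exact h1 (hf _ hq)
    have t2 : a * z + v + m ∈ T := by by_contra hq; exact h2 (hf _ hq)
    exact hm (Finset.mem_sub.2 ⟨a * z + v + m, t2, a * z + v, t1, by ring⟩)
  have hcorr : ∀ x y : ℤ, x ∈ T → ∑ m ∈ M', f (x + m) * f (y + m) = c (y - x) := by
    intro x y hxT
    have h1 : ∑ m ∈ M', f (x + m) * f (y + m)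
        = ∑ t ∈ M'.image (fun m => x + m), f t * f (t + (y - x)) := by
      rw [Finset.sum_image (by intro a _ b _ h; exact add_left_cancel h)]
      refine Finset.sum_congr rfl fun m _ => ?_
      congr 2
      ring
    have h2 : ∑ t ∈ M'.image (fun m => x + m), f t * f (t + (y - x))
        = ∑ t ∈ T, f t * f (t + (y - x)) := by
      symm
      apply Finset.sum_subset
      · intro t htT
        refine Finset.mem_image.2 ⟨t - x, ?_, by ring⟩
        exact Finset.mem_union_right _ (Finset.mem_sub.2 ⟨t, htT, x, hxT, rfl⟩)
      · intro t _ htT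
        rw [hf t htT, zero_mul]
    rw [h1, h2, hc]
    exact Finset.sum_congr rfl fun t _ => mul_comm _ _
  have hfact : ∑ m ∈ M', (D m) ^ 2 = ∑ d ∈ (J - J : Finset ℤ), c (a * d) * D (a * d) := by
    have e1 : ∑ m ∈ M', (D m) ^ 2 = ∑ z ∈ J, ∑ w ∈ J,
        f (a * z + v) * f (a * w + v) * (∑ m ∈ M', f (a * z + v + m) * f (a * w + v + m)) := by
      simp_rw [hD, sq, Finset.sum_mul, Finset.mul_sum]
      rw [Finset.sum_comm]
      refine Finset.sum_congr rfl fun z _ => ?_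
      rw [Finset.sum_comm]
      refine Finset.sum_congr rfl fun w _ => ?_
      refine Finset.sum_congr rfl fun m _ => ?_
      ring
    have e2 : ∀ z ∈ J, ∀ w ∈ J,
        f (a * z + v) * f (a * w + v) * (∑ m ∈ M', f (a * z + v + m) * f (a * w + v + m))
          = f (a * z + v) * f (a * w + v) * c (a * (w - z)) := by
      intro z _ w _
      by_cases h1 : f (a * z + v) = 0
      · rw [h1]; ring
      · have hxT : a * z + v ∈ T := by by_contra hq; exact h1 (hf _ hq)
        rw [hcorr _ _ hxT]
        have : a * w + v - (a * z + v) = a * (w - z) := by ring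
        rw [this]
    have e3 : ∀ z ∈ J, ∑ w ∈ J, f (a * z + v) * f (a * w + v) * c (a * (w - z))
        = ∑ d ∈ (J - J : Finset ℤ), f (a * z + v) * f (a * (z + d) + v) * c (a * d) := by
      intro z hzJ
      have h4 : ∑ d ∈ (J - J : Finset ℤ), f (a * z + v) * f (a * (z + d) + v) * c (a * d)
          = ∑ w ∈ (J - J : Finset ℤ).image (fun d => z + d),
              f (a * z + v) * f (a * w + v) * c (a * (w - z)) := by
        rw [Finset.sum_image (by intro a _ b _ h; exact add_left_cancel h)]
        refine Finset.sum_congr rfl fun d _ => ?_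
        have e5 : a * (z + d) + v = a * (z + d) + v := rfl
        have e6 : z + d - z = d := by ring
        rw [e6]
      rw [h4]
      apply Finset.sum_subset
      · intro w hwJ
        exact Finset.mem_image.2 ⟨w - z, Finset.mem_sub.2 ⟨w, hwJ, z, hzJ, rfl⟩, by ring⟩
      · intro w _ hwJ
        have : f (a * w + v) = 0 := by
          apply hf
          intro hq
          exact hwJ (hJ _ hq)
        rw [this]; ring
    rw [e1]
    rw [Finset.sum_congr rfl (fun z hz => Finset.sum_congr rfl (fun w hw => e2 z hz w hw))]
    rw [Finset.sum_congr rfl e3]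
    rw [Finset.sum_comm]
    refine Finset.sum_congr rfl fun d _ => ?_
    rw [hD, Finset.mul_sum]
    refine Finset.sum_congr rfl fun z _ => ?_
    have : a * (z + d) + v = a * z + v + a * d := by ring
    rw [this]; ring
  have hCS : (∑ m ∈ M', (D m) ^ 2) ^ 2 ≤
      (∑ d ∈ (J - J : Finset ℤ), (c (a * d)) ^ 2) * (∑ d ∈ (J - J : Finset ℤ), (D (a * d)) ^ 2) := by
    rw [hfact]
    exact Finset.sum_mul_sq_le_sq_mul_sq _ _ _
  have hc2 : ∑ d ∈ (J - J : Finset ℤ), (c (a * d)) ^ 2 ≤ gowersSum 2 f := by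
    have himg : ∑ m ∈ (J - J : Finset ℤ).image (fun d => a * d), (c m) ^ 2
        = ∑ d ∈ (J - J : Finset ℤ), (c (a * d)) ^ 2 := by
      rw [Finset.sum_image (fun x _ y _ h => mul_left_cancel₀ ha h)]
    rw [← himg, hc]
    exact gowersSum_two_partial f T hf _
  have hD2 : ∑ d ∈ (J - J : Finset ℤ), (D (a * d)) ^ 2 ≤ ∑ m ∈ M', (D m) ^ 2 := by
    have himg : ∑ m ∈ (J - J : Finset ℤ).image (fun d => a * d), (D m) ^ 2
        = ∑ d ∈ (J - J : Finset ℤ), (D (a * d)) ^ 2 := by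
      rw [Finset.sum_image (fun x _ y _ h => mul_left_cancel₀ ha h)]
    rw [← himg]
    calc ∑ m ∈ (J - J : Finset ℤ).image (fun d => a * d), (D m) ^ 2
        ≤ ∑ m ∈ (J - J : Finset ℤ).image (fun d => a * d) ∪ M', (D m) ^ 2 :=
          Finset.sum_le_sum_of_subset_of_nonneg Finset.subset_union_left (fun _ _ _ => sq_nonneg _)
      _ = ∑ m ∈ M', (D m) ^ 2 := by
          symm
          apply Finset.sum_subset Finset.subset_union_right
          intro m _ hm
          rw [hDsupp m (fun hq => hm (Finset.mem_union_right _ hq))]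
          norm_num
  have hG0 : 0 ≤ gowersSum 2 f := gowersSum_two_nonneg f T hf
  have hSnn : 0 ≤ ∑ m ∈ M', (D m) ^ 2 := Finset.sum_nonneg fun _ _ => sq_nonneg _
  have hfin : ∑ m ∈ M', (D m) ^ 2 ≤ gowersSum 2 f := by
    rcases eq_or_lt_of_le hSnn with h | h
    · rw [← h]; exact hG0
    · have h5 : (∑ m ∈ M', (D m) ^ 2) * (∑ m ∈ M', (D m) ^ 2)
          ≤ gowersSum 2 f * (∑ m ∈ M', (D m) ^ 2) := by
        calc (∑ m ∈ M', (D m) ^ 2) * (∑ m ∈ M', (D m) ^ 2)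
            = (∑ m ∈ M', (D m) ^ 2) ^ 2 := (sq _).symm
          _ ≤ _ := hCS
          _ ≤ gowersSum 2 f * (∑ m ∈ M', (D m) ^ 2) :=
              mul_le_mul hc2 hD2 (Finset.sum_nonneg fun _ _ => sq_nonneg _) hG0
      exact le_of_mul_le_mul_right h5 h
  exact h0.trans hfin

/-- Base case of the generalised von Neumann estimate: if `g₀, g₁, g₂` are
`1`-bounded and supported on `[-N, N]` and `a₀, a₁` are nonzero integers, then
`|∑_{z₀,z₁} g₀(z₀) g₁(z₁) g₂(a₀z₀ + a₁z₁)| ≤ C N^{5/4} ‖g₂‖_{U²}`. -/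
theorem bilinear_U2_von_neumann :
    ∃ C : ℝ, 0 < C ∧
      ∀ (N : ℕ), 1 ≤ N → ∀ (g₀ g₁ g₂ : ℤ → ℝ) (a₀ a₁ : ℤ),
        a₀ ≠ 0 → a₁ ≠ 0 →
        (∀ x, |g₀ x| ≤ 1) → (∀ x, |g₁ x| ≤ 1) → (∀ x, |g₂ x| ≤ 1) →
        (∀ x : ℤ, x ∉ Set.Icc (-(N : ℤ)) N → g₀ x = 0) →
        (∀ x : ℤ, x ∉ Set.Icc (-(N : ℤ)) N → g₁ x = 0) →
        (∀ x : ℤ, x ∉ Set.Icc (-(N : ℤ)) N → g₂ x = 0) →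
        |∑ᶠ z₀ : ℤ, ∑ᶠ z₁ : ℤ, g₀ z₀ * g₁ z₁ * g₂ (a₀ * z₀ + a₁ * z₁)| ≤
          C * (N : ℝ) ^ ((5 : ℝ) / 4) * gowersSum 2 g₂ ^ ((1 : ℝ) / 4) := by
  refine ⟨4, by norm_num, ?_⟩
  intro N hN g₀ g₁ g₂ a₀ a₁ ha₀ ha₁ hb₀ hb₁ hb₂ hs₀ hs₁ hs₂
  set I : Finset ℤ := Finset.Icc (-(N : ℤ)) N with hIdef
  have hmemI : ∀ x : ℤ, x ∉ I → x ∉ Set.Icc (-(N : ℤ)) N := by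
    intro x hx hmem
    exact hx (by rw [hIdef]; exact Finset.mem_Icc.2 ⟨hmem.1, hmem.2⟩)
  have hI0 : ∀ x : ℤ, x ∉ I → g₀ x = 0 := fun x hx => hs₀ x (hmemI x hx)
  have hI1 : ∀ x : ℤ, x ∉ I → g₁ x = 0 := fun x hx => hs₁ x (hmemI x hx)
  have hI2 : ∀ x : ℤ, x ∉ I → g₂ x = 0 := fun x hx => hs₂ x (hmemI x hx)
  have hG0 : 0 ≤ gowersSum 2 g₂ := gowersSum_two_nonneg g₂ I hI2
  set G : ℝ := gowersSum 2 g₂ with hGdef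
  -- finsum to finset sum
  have hfin : ∑ᶠ z₀ : ℤ, ∑ᶠ z₁ : ℤ, g₀ z₀ * g₁ z₁ * g₂ (a₀ * z₀ + a₁ * z₁)
      = ∑ z₀ ∈ I, ∑ z₁ ∈ I, g₀ z₀ * g₁ z₁ * g₂ (a₀ * z₀ + a₁ * z₁) := by
    have h1 : ∀ z₀ : ℤ, ∑ᶠ z₁ : ℤ, g₀ z₀ * g₁ z₁ * g₂ (a₀ * z₀ + a₁ * z₁)
        = ∑ z₁ ∈ I, g₀ z₀ * g₁ z₁ * g₂ (a₀ * z₀ + a₁ * z₁) := by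
      intro z₀
      apply finsum_eq_finset_sum_of_support_subset
      intro z₁ hz
      simp only [Function.mem_support] at hz
      by_contra hzI
      exact hz (by rw [hI1 z₁ hzI]; ring)
    rw [finsum_congr h1]
    apply finsum_eq_finset_sum_of_support_subset
    intro z₀ hz
    simp only [Function.mem_support] at hz
    by_contra hzI
    apply hz
    apply Finset.sum_eq_zero
    intro z₁ _
    rw [hI0 z₀ hzI]; ring
  set S : ℝ := ∑ z₀ ∈ I, ∑ z₁ ∈ I, g₀ z₀ * g₁ z₁ * g₂ (a₀ * z₀ + a₁ * z₁) with hSdef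
  rw [hfin]
  -- cardinality
  set κ : ℝ := (I.card : ℝ) with hκdef
  have hcardN : I.card = 2 * N + 1 := by rw [hIdef, Int.card_Icc]; omega
  have hκ3N : κ ≤ 3 * (N : ℝ) := by
    rw [hκdef, hcardN]
    push_cast
    have : (1 : ℝ) ≤ (N : ℝ) := by exact_mod_cast hN
    linarith
  have hκ0 : 0 ≤ κ := by positivity
  -- step 1 : CS in z₁
  set T1 : ℤ → ℝ := fun z₁ => ∑ z₀ ∈ I, g₀ z₀ * g₂ (a₀ * z₀ + a₁ * z₁) with hT1
  have hswap : S = ∑ z₁ ∈ I, g₁ z₁ * T1 z₁ := by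
    rw [hSdef, Finset.sum_comm]
    refine Finset.sum_congr rfl fun z₁ _ => ?_
    rw [hT1, Finset.mul_sum]
    refine Finset.sum_congr rfl fun z₀ _ => by ring
  set St : ℝ := ∑ z₁ ∈ I, (T1 z₁) ^ 2 with hSt
  have hSt0 : 0 ≤ St := Finset.sum_nonneg fun _ _ => sq_nonneg _
  have hCS1 : S ^ 2 ≤ κ * St := by
    rw [hswap]
    calc (∑ z₁ ∈ I, g₁ z₁ * T1 z₁) ^ 2
        ≤ (∑ z₁ ∈ I, (g₁ z₁) ^ 2) * ∑ z₁ ∈ I, (T1 z₁) ^ 2 :=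
          Finset.sum_mul_sq_le_sq_mul_sq _ _ _
      _ ≤ κ * St := by
          apply mul_le_mul_of_nonneg_right _ hSt0
          calc ∑ z₁ ∈ I, (g₁ z₁) ^ 2 ≤ ∑ z₁ ∈ I, 1 := by
                refine Finset.sum_le_sum fun z₁ _ => ?_
                rw [← sq_abs]
                exact pow_le_one₀ (abs_nonneg _) (hb₁ z₁)
            _ = κ := by rw [Finset.sum_const, nsmul_eq_mul, mul_one, hκdef]
  -- expand into pairs
  set Gp : ℤ × ℤ → ℝ := fun p => ∑ z₁ ∈ I, g₂ (a₀ * p.1 + a₁ * z₁) * g₂ (a₀ * p.2 + a₁ * z₁)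
    with hGp
  have hexpand : St = ∑ p ∈ I ×ˢ I, (g₀ p.1 * g₀ p.2) * Gp p := by
    rw [hSt, Finset.sum_product]
    simp only [hGp, hT1]
    simp_rw [sq, Finset.sum_mul_sum, Finset.mul_sum]
    rw [Finset.sum_comm]
    refine Finset.sum_congr rfl fun z₀ _ => ?_
    rw [Finset.sum_comm]
    refine Finset.sum_congr rfl fun z₀' _ => ?_
    refine Finset.sum_congr rfl fun z₁ _ => by ring
  have hCS2 : St ^ 2 ≤ κ ^ 2 * ∑ p ∈ I ×ˢ I, (Gp p) ^ 2 := by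
    rw [hexpand]
    calc (∑ p ∈ I ×ˢ I, (g₀ p.1 * g₀ p.2) * Gp p) ^ 2
        ≤ (∑ p ∈ I ×ˢ I, (g₀ p.1 * g₀ p.2) ^ 2) * ∑ p ∈ I ×ˢ I, (Gp p) ^ 2 :=
          Finset.sum_mul_sq_le_sq_mul_sq _ _ _
      _ ≤ κ ^ 2 * ∑ p ∈ I ×ˢ I, (Gp p) ^ 2 := by
          apply mul_le_mul_of_nonneg_right _ (Finset.sum_nonneg fun _ _ => sq_nonneg _)
          calc ∑ p ∈ I ×ˢ I, (g₀ p.1 * g₀ p.2) ^ 2 ≤ ∑ p ∈ I ×ˢ I, 1 := by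
                refine Finset.sum_le_sum fun p _ => ?_
                rw [← sq_abs, abs_mul]
                exact pow_le_one₀ (by positivity)
                  (mul_le_one₀ (hb₀ p.1) (abs_nonneg _) (hb₀ p.2))
            _ = κ ^ 2 := by
                rw [Finset.sum_const, nsmul_eq_mul, mul_one, Finset.card_product, hκdef]
                push_cast
                ring
  -- enlarge to J
  set B : ℤ := (N : ℤ) + (a₁.natAbs : ℤ) * N with hB
  set J : Finset ℤ := Finset.Icc (-B) B with hJdef
  have hIJ : I ⊆ J := by
    rw [hIdef, hJdef]
    have hnn : (0 : ℤ) ≤ (a₁.natAbs : ℤ) * N := by positivity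
    apply Finset.Icc_subset_Icc <;> rw [hB] <;> linarith
  have hJprop : ∀ z₁ ∈ I, ∀ z : ℤ, a₀ * z + a₁ * z₁ ∈ I → z ∈ J := by
    intro z₁ hz₁ z hz
    rw [hIdef, Finset.mem_Icc] at hz₁ hz
    have h1 : |a₀ * z + a₁ * z₁| ≤ (N : ℤ) := abs_le.2 ⟨hz.1, hz.2⟩
    have h2 : |a₁ * z₁| ≤ |a₁| * N := by
      rw [abs_mul]
      exact mul_le_mul_of_nonneg_left (abs_le.2 ⟨hz₁.1, hz₁.2⟩) (abs_nonneg _)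
    have h3 : |a₀ * z| ≤ (N : ℤ) + |a₁| * N := by
      have : a₀ * z = (a₀ * z + a₁ * z₁) - a₁ * z₁ := by ring
      rw [this]
      exact (abs_sub _ _).trans (add_le_add h1 h2)
    have h4 : |z| ≤ |a₀ * z| := by
      rw [abs_mul]
      nlinarith [Int.one_le_abs ha₀, abs_nonneg z]
    have h5 : |z| ≤ B := by
      rw [hB, ← Int.abs_eq_natAbs]
      exact h4.trans h3
    rw [hJdef, Finset.mem_Icc]
    exact ⟨neg_le_of_abs_le h5, le_of_abs_le h5⟩
  have hmono : ∑ p ∈ I ×ˢ I, (Gp p) ^ 2 ≤ ∑ p ∈ J ×ˢ J, (Gp p) ^ 2 :=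
    Finset.sum_le_sum_of_subset_of_nonneg
      (Finset.product_subset_product hIJ hIJ) (fun _ _ _ => sq_nonneg _)
  -- factor into K
  set K : ℤ × ℤ → ℝ := fun q => ∑ z ∈ J, g₂ (a₀ * z + a₁ * q.1) * g₂ (a₀ * z + a₁ * q.2)
    with hK
  have hfactor : ∑ p ∈ J ×ˢ J, (Gp p) ^ 2 = ∑ q ∈ I ×ˢ I, (K q) ^ 2 := by
    rw [Finset.sum_product, Finset.sum_product]
    simp only [hGp, hK]
    simp_rw [sq, Finset.sum_mul_sum]
    -- LHS : ∑ z₀ ∈ J, ∑ z₀' ∈ J, ∑ z₁ ∈ I, ∑ z₁' ∈ I, X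
    -- RHS : ∑ z₁ ∈ I, ∑ z₁' ∈ I, ∑ z ∈ J, ∑ z' ∈ J, Y
    calc ∑ z₀ ∈ J, ∑ z₀' ∈ J, ∑ z₁ ∈ I, ∑ z₁' ∈ I,
            (g₂ (a₀ * z₀ + a₁ * z₁) * g₂ (a₀ * z₀' + a₁ * z₁)) *
              (g₂ (a₀ * z₀ + a₁ * z₁') * g₂ (a₀ * z₀' + a₁ * z₁'))
        = ∑ z₀ ∈ J, ∑ z₁ ∈ I, ∑ z₀' ∈ J, ∑ z₁' ∈ I,
            (g₂ (a₀ * z₀ + a₁ * z₁) * g₂ (a₀ * z₀' + a₁ * z₁)) *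
              (g₂ (a₀ * z₀ + a₁ * z₁') * g₂ (a₀ * z₀' + a₁ * z₁')) := by
          exact Finset.sum_congr rfl fun z₀ _ => Finset.sum_comm
      _ = ∑ z₁ ∈ I, ∑ z₀ ∈ J, ∑ z₀' ∈ J, ∑ z₁' ∈ I,
            (g₂ (a₀ * z₀ + a₁ * z₁) * g₂ (a₀ * z₀' + a₁ * z₁)) *
              (g₂ (a₀ * z₀ + a₁ * z₁') * g₂ (a₀ * z₀' + a₁ * z₁')) := Finset.sum_comm
      _ = ∑ z₁ ∈ I, ∑ z₀ ∈ J, ∑ z₁' ∈ I, ∑ z₀' ∈ J,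
            (g₂ (a₀ * z₀ + a₁ * z₁) * g₂ (a₀ * z₀' + a₁ * z₁)) *
              (g₂ (a₀ * z₀ + a₁ * z₁') * g₂ (a₀ * z₀' + a₁ * z₁')) := by
          exact Finset.sum_congr rfl fun z₁ _ => Finset.sum_congr rfl fun z₀ _ =>
            Finset.sum_comm
      _ = ∑ z₁ ∈ I, ∑ z₁' ∈ I, ∑ z₀ ∈ J, ∑ z₀' ∈ J,
            (g₂ (a₀ * z₀ + a₁ * z₁) * g₂ (a₀ * z₀' + a₁ * z₁)) *
              (g₂ (a₀ * z₀ + a₁ * z₁') * g₂ (a₀ * z₀' + a₁ * z₁')) := by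
          exact Finset.sum_congr rfl fun z₁ _ => Finset.sum_comm
      _ = ∑ z₁ ∈ I, ∑ z₁' ∈ I, ∑ z₀ ∈ J, ∑ z₀' ∈ J,
            (g₂ (a₀ * z₀ + a₁ * z₁) * g₂ (a₀ * z₀ + a₁ * z₁')) *
              (g₂ (a₀ * z₀' + a₁ * z₁) * g₂ (a₀ * z₀' + a₁ * z₁')) := by
          refine Finset.sum_congr rfl fun z₁ _ => Finset.sum_congr rfl fun z₁' _ =>
            Finset.sum_congr rfl fun z₀ _ => Finset.sum_congr rfl fun z₀' _ => by ring
  -- per z₁ bound via key lemma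
  have hper : ∀ z₁ ∈ I, ∑ z₁' ∈ I, (K (z₁, z₁')) ^ 2 ≤ G := by
    intro z₁ hz₁
    have hinj : ∀ x ∈ I, ∀ y ∈ I, a₁ * x - a₁ * z₁ = a₁ * y - a₁ * z₁ → x = y := by
      intro x _ y _ h
      have : a₁ * x = a₁ * y := by linarith
      exact mul_left_cancel₀ ha₁ this
    have himg : ∑ m ∈ I.image (fun t => a₁ * t - a₁ * z₁),
        (∑ z ∈ J, g₂ (a₀ * z + a₁ * z₁) * g₂ (a₀ * z + a₁ * z₁ + m)) ^ 2
        = ∑ z₁' ∈ I, (K (z₁, z₁')) ^ 2 := by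
      rw [Finset.sum_image hinj]
      refine Finset.sum_congr rfl fun z₁' _ => ?_
      simp only [hK]
      congr 1
      refine Finset.sum_congr rfl fun z _ => ?_
      congr 2
      ring
    rw [← himg, hGdef]
    exact key_lemma g₂ I hI2 a₀ (a₁ * z₁) ha₀ J (hJprop z₁ hz₁) _
  have hKsum : ∑ q ∈ I ×ˢ I, (K q) ^ 2 ≤ κ * G := by
    rw [Finset.sum_product]
    calc ∑ z₁ ∈ I, ∑ z₁' ∈ I, (K (z₁, z₁')) ^ 2 ≤ ∑ z₁ ∈ I, G :=
          Finset.sum_le_sum hper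
      _ = κ * G := by rw [Finset.sum_const, nsmul_eq_mul, hκdef]
  -- assemble
  have hS4 : S ^ 4 ≤ κ ^ 5 * G := by
    have e1 : S ^ 4 = (S ^ 2) ^ 2 := by ring
    have e2 : (S ^ 2) ^ 2 ≤ (κ * St) ^ 2 := pow_le_pow_left₀ (sq_nonneg S) hCS1 2
    have e3 : (κ * St) ^ 2 = κ ^ 2 * St ^ 2 := by ring
    have e4 : St ^ 2 ≤ κ ^ 2 * (κ * G) := by
      calc St ^ 2 ≤ κ ^ 2 * ∑ p ∈ I ×ˢ I, (Gp p) ^ 2 := hCS2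
        _ ≤ κ ^ 2 * ∑ p ∈ J ×ˢ J, (Gp p) ^ 2 := by
            apply mul_le_mul_of_nonneg_left hmono (by positivity)
        _ = κ ^ 2 * ∑ q ∈ I ×ˢ I, (K q) ^ 2 := by rw [hfactor]
        _ ≤ κ ^ 2 * (κ * G) := by
            apply mul_le_mul_of_nonneg_left hKsum (by positivity)
    calc S ^ 4 = (S ^ 2) ^ 2 := e1
      _ ≤ (κ * St) ^ 2 := e2
      _ = κ ^ 2 * St ^ 2 := e3
      _ ≤ κ ^ 2 * (κ ^ 2 * (κ * G)) := mul_le_mul_of_nonneg_left e4 (by positivity)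
      _ = κ ^ 5 * G := by ring
  -- final numerics
  have hNR : (0 : ℝ) ≤ (N : ℝ) := Nat.cast_nonneg N
  have hRHS0 : 0 ≤ (4 : ℝ) * (N : ℝ) ^ ((5 : ℝ) / 4) * G ^ ((1 : ℝ) / 4) := by
    apply mul_nonneg (mul_nonneg (by norm_num) (Real.rpow_nonneg hNR _))
      (Real.rpow_nonneg hG0 _)
  have hpow : |S| ^ 4 ≤ ((4 : ℝ) * (N : ℝ) ^ ((5 : ℝ) / 4) * G ^ ((1 : ℝ) / 4)) ^ 4 := by
    have habs : |S| ^ 4 = S ^ 4 := by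
      rw [← abs_pow]
      exact abs_of_nonneg (by positivity)
    have hk5 : κ ^ 5 ≤ 243 * (N : ℝ) ^ 5 := by
      calc κ ^ 5 ≤ (3 * (N : ℝ)) ^ 5 := pow_le_pow_left₀ hκ0 hκ3N 5
        _ = 243 * (N : ℝ) ^ 5 := by ring
    have hrhs : ((4 : ℝ) * (N : ℝ) ^ ((5 : ℝ) / 4) * G ^ ((1 : ℝ) / 4)) ^ 4
        = 256 * (N : ℝ) ^ 5 * G := by
      rw [mul_pow, mul_pow]
      rw [← Real.rpow_natCast ((N : ℝ) ^ ((5 : ℝ) / 4)) 4, ← Real.rpow_natCast (G ^ ((1 : ℝ) / 4)) 4]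
      rw [← Real.rpow_mul hNR, ← Real.rpow_mul hG0]
      have e1 : (5 : ℝ) / 4 * ((4 : ℕ) : ℝ) = ((5 : ℕ) : ℝ) := by norm_num
      have e2 : (1 : ℝ) / 4 * ((4 : ℕ) : ℝ) = 1 := by norm_num
      rw [e1, e2, Real.rpow_natCast, Real.rpow_one]
      norm_num
    rw [habs, hrhs]
    calc S ^ 4 ≤ κ ^ 5 * G := hS4
      _ ≤ 243 * (N : ℝ) ^ 5 * G := mul_le_mul_of_nonneg_right hk5 hG0
      _ ≤ 256 * (N : ℝ) ^ 5 * G := by nlinarith [pow_nonneg hNR 5]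
  exact le_of_pow_le_pow_left₀ (by norm_num) hRHS0 hpow
end

section
/- Suppose that for every δ ∈ (0,1] and every N satisfying N ≥ exp(exp(1/(c·δ^C))) (with fixed constants C ≥ 1, c ∈ (0,1]), any set A ⊆ [N] of density δ = |A|/N lacking a given translation- and k-th-power-dilation-invariant pattern admits a k-th power progression P ⊆ [N] with |P| ≥ N^{exp(-1/(c·δ^C))} and |A ∩ P| ≥ (δ + c·δ^C)|P|. Then any A ⊆ [N] lacking the pattern satisfies |A| ≤ K·N·(log log N)^{-1/C'} for appropriate constants K, C' depending on c, C, provided N ≥ 3. -/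
open Finset

private lemma log_le_of_le_exp' {x y : ℝ} (hx : 0 ≤ x) (hy : 0 ≤ y)
    (h : x ≤ Real.exp y) : Real.log x ≤ y := by
  rcases eq_or_lt_of_le hx with h0 | h0
  · simp [← h0]; exact hy
  · exact (Real.log_le_iff_le_exp h0).mpr h

private lemma mono_aux {c C : ℝ} (hc : 0 < c) (hC : 1 ≤ C) {x y : ℝ}
    (hx : 0 < x) (hxy : x ≤ y) (hy : y ≤ 1) :
    (2 - y) / (c * y ^ C) ^ 2 ≤ (2 - x) / (c * x ^ C) ^ 2 := by
  have hxC : 0 < x ^ C := Real.rpow_pos_of_pos hx C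
  have hyC : x ^ C ≤ y ^ C := Real.rpow_le_rpow hx.le hxy (by linarith)
  apply div_le_div₀ (by linarith) (by linarith) (by positivity)
  apply pow_le_pow_left₀ (by positivity)
  exact mul_le_mul_of_nonneg_left hyC hc.le

private lemma subset_card_le {N : ℕ} {A : Finset ℤ}
    (hsub : (A : Set ℤ) ⊆ Set.Icc (1 : ℤ) N) : A.card ≤ N := by
  have h1 : A ⊆ Finset.Icc (1 : ℤ) N := by
    intro a ha
    have := hsub ha
    simpa [Finset.mem_Icc] using this
  have := Finset.card_le_card h1
  simpa [Int.card_Icc] using this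

set_option maxHeartbeats 2000000 in
private lemma key_lemma_s15 (n k : ℕ) (cs : Fin n → ℤ)
    (c C : ℝ) (hc : 0 < c) (hc1 : c ≤ 1) (hC : 1 ≤ C)
    (hinc : ∀ (N : ℕ) (A : Finset ℤ) (δ : ℝ), 0 < δ → δ ≤ 1 →
      (A : Set ℤ) ⊆ Set.Icc (1 : ℤ) N → (A.card : ℝ) = δ * N →
      (¬∃ (x y : ℤ), y ≠ 0 ∧ x ∈ A ∧ ∀ i, x + cs i * y ^ k ∈ A) →
      Real.exp (Real.exp (1 / (c * δ ^ C))) ≤ (N : ℝ) →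
      ∃ (a : ℤ) (q N₁ : ℕ), 1 ≤ q ∧ 1 ≤ N₁ ∧
        (∀ z ∈ Finset.Icc (1 : ℤ) (N₁ : ℤ),
          a + (q : ℤ) ^ k * z ∈ Finset.Icc (1 : ℤ) (N : ℤ)) ∧
        (N : ℝ) ^ Real.exp (-(1 / (c * δ ^ C))) ≤ (N₁ : ℝ) ∧
        (δ + c * δ ^ C) * (N₁ : ℝ) ≤
          ((A ∩ (Finset.Icc (1 : ℤ) (N₁ : ℤ)).image
            (fun z => a + (q : ℤ) ^ k * z)).card : ℝ)) :
    ∀ (μ N : ℕ) (A : Finset ℤ) (δ : ℝ), N * N + N - A.card ≤ μ →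
      0 < δ → δ ≤ 1 → (A : Set ℤ) ⊆ Set.Icc (1 : ℤ) N →
      (A.card : ℝ) = δ * N →
      (¬∃ (x y : ℤ), y ≠ 0 ∧ x ∈ A ∧ ∀ i, x + cs i * y ^ k ∈ A) →
      Real.log (Real.log N) ≤ (2 - δ) / (c * δ ^ C) ^ 2 := by
  intro μ
  induction μ with
  | zero =>
    intro N A δ hμ hδ hδ1 hsub hcard hfree
    have hAN : A.card ≤ N := subset_card_le hsub
    have h2 : N * N + N ≤ A.card := by omega
    have hN0 : N = 0 := by nlinarith
    subst hN0
    have hs : 0 < c * δ ^ C := by positivity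
    have : (0:ℝ) ≤ (2 - δ) / (c * δ ^ C) ^ 2 :=
      div_nonneg (by linarith) (by positivity)
    simpa using this
  | succ μ ih =>
    intro N A δ hμ hδ hδ1 hsub hcard hfree
    set s : ℝ := c * δ ^ C with hs_def
    have hs : 0 < s := by positivity
    have hδC1 : δ ^ C ≤ 1 := Real.rpow_le_one hδ.le hδ1 (by linarith)
    have hs1 : s ≤ 1 := by
      calc s ≤ 1 * 1 := mul_le_mul hc1 hδC1 (by positivity) (by norm_num)
      _ = 1 := by norm_num
    by_cases hbig : Real.exp (Real.exp (1 / s)) ≤ (N : ℝ)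
    · -- apply density increment
      obtain ⟨a, q, N₁, hq, hN₁, hmap, hlen, hdens⟩ :=
        hinc N A δ hδ hδ1 hsub hcard hfree hbig
      set f : ℤ → ℤ := fun z => a + (q : ℤ) ^ k * z with hf_def
      have hqk : ((q : ℤ)) ^ k ≠ 0 := by
        apply pow_ne_zero
        exact_mod_cast Nat.one_le_iff_ne_zero.mp hq
      have hfinj : Function.Injective f := by
        intro z w h
        simp only [hf_def] at h
        have : (q:ℤ)^k * z = (q:ℤ)^k * w := by linarith
        exact mul_left_cancel₀ hqk this
      set A₁ : Finset ℤ :=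
        (Finset.Icc (1 : ℤ) (N₁ : ℤ)).filter (fun z => f z ∈ A) with hA₁_def
      have himg : A₁.image f = A ∩ (Finset.Icc (1 : ℤ) (N₁ : ℤ)).image f := by
        ext b
        simp only [hA₁_def, Finset.mem_image, Finset.mem_filter, Finset.mem_inter]
        constructor
        · rintro ⟨z, ⟨hz1, hz2⟩, rfl⟩
          exact ⟨hz2, z, hz1, rfl⟩
        · rintro ⟨hb, z, hz, rfl⟩
          exact ⟨z, ⟨hz, hb⟩, rfl⟩
      have hA₁card : (A₁.card : ℝ) =
          ((A ∩ (Finset.Icc (1 : ℤ) (N₁ : ℤ)).image f).card : ℝ) := by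
        rw [← himg, Finset.card_image_of_injective _ hfinj]
      have hIccN₁ : (Finset.Icc (1:ℤ) (N₁:ℤ)).card = N₁ := by
        simp [Int.card_Icc]
      have hA₁N₁ : A₁.card ≤ N₁ := by
        have := Finset.card_le_card
          (Finset.filter_subset (fun z => f z ∈ A) (Finset.Icc (1:ℤ) (N₁:ℤ)))
        rw [hIccN₁] at this
        exact this
      have hN₁N : N₁ ≤ N := by
        have h1 : (Finset.Icc (1:ℤ) (N₁:ℤ)).image f ⊆ Finset.Icc (1:ℤ) (N:ℤ) := by
          intro b hb
          obtain ⟨z, hz, rfl⟩ := Finset.mem_image.mp hb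
          exact hmap z hz
        have h2 := Finset.card_le_card h1
        rw [Finset.card_image_of_injective _ hfinj, hIccN₁] at h2
        simpa [Int.card_Icc] using h2
      set δ₁ : ℝ := (A₁.card : ℝ) / (N₁ : ℝ) with hδ₁_def
      have hN₁pos : (0:ℝ) < N₁ := by exact_mod_cast hN₁
      have hδ₁card : (A₁.card : ℝ) = δ₁ * N₁ := by
        rw [hδ₁_def, div_mul_cancel₀ _ hN₁pos.ne']
      have hdens' : (δ + s) * (N₁ : ℝ) ≤ (A₁.card : ℝ) := by
        rw [hA₁card]; exact hdens
      have hδ₁lb : δ + s ≤ δ₁ := by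
        rw [hδ₁_def, le_div_iff₀ hN₁pos]
        exact hdens'
      have hδ₁pos : 0 < δ₁ := by linarith
      have hδ₁1 : δ₁ ≤ 1 := by
        rw [hδ₁_def, div_le_one hN₁pos]
        exact_mod_cast hA₁N₁
      have hδs1 : δ + s ≤ 1 := le_trans hδ₁lb hδ₁1
      have hA₁sub : (A₁ : Set ℤ) ⊆ Set.Icc (1 : ℤ) N₁ := by
        intro z hz
        simp only [hA₁_def, Finset.coe_filter, Set.mem_setOf_eq] at hz
        have := hz.1
        simpa [Finset.mem_Icc] using this
      have hA₁free : ¬∃ (x y : ℤ), y ≠ 0 ∧ x ∈ A₁ ∧ ∀ i, x + cs i * y ^ k ∈ A₁ := by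
        rintro ⟨x, y, hy, hx, hall⟩
        apply hfree
        refine ⟨f x, (q : ℤ) * y, ?_, ?_, ?_⟩
        · exact mul_ne_zero (by exact_mod_cast Nat.one_le_iff_ne_zero.mp hq) hy
        · exact (Finset.mem_filter.mp hx).2
        · intro i
          have h := (Finset.mem_filter.mp (hall i)).2
          have heq2 : f (x + cs i * y ^ k) = f x + cs i * ((q:ℤ) * y) ^ k := by
            simp only [hf_def, mul_pow]
            ring
          rwa [heq2] at h
      have hNpos : 1 ≤ N := by
        by_contra hcon
        push_neg at hcon
        have hN00 : N = 0 := by omega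
        rw [hN00] at hbig
        norm_num at hbig
        linarith [Real.exp_pos (Real.exp (1/s))]
      have hAN : A.card ≤ N := subset_card_le hsub
      have hμ' : N₁ * N₁ + N₁ - A₁.card ≤ μ := by
        rcases lt_or_eq_of_le hN₁N with hlt | heq
        · obtain ⟨M, rfl⟩ : ∃ M, N = M + 1 := ⟨N - 1, by omega⟩
          have hle : N₁ ≤ M := by omega
          have e1 : N₁ * N₁ ≤ M * M := Nat.mul_le_mul hle hle
          have e2 : (M+1) * (M+1) = M * M + 2 * M + 1 := by ring
          omega
        · subst heq
          have hcardlt : A.card < A₁.card := by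
            have h1 : (A.card : ℝ) < (A₁.card : ℝ) := by
              rw [hcard]
              nlinarith [mul_pos hs hN₁pos]
            exact_mod_cast h1
          omega
      have hIH := ih N₁ A₁ δ₁ hμ' hδ₁pos hδ₁1 hA₁sub hδ₁card hA₁free
      have hN0 : (0:ℝ) < N := by
        exact_mod_cast hNpos
      have hlogN : Real.exp (1/s) ≤ Real.log N :=
        (Real.le_log_iff_exp_le hN0).mpr hbig
      have hlogNpos : 0 < Real.log N := lt_of_lt_of_le (Real.exp_pos _) hlogN
      have hlogN₁ : Real.exp (-(1/s)) * Real.log N ≤ Real.log N₁ := by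
        have h1 : Real.log ((N:ℝ) ^ Real.exp (-(1/s))) ≤ Real.log N₁ :=
          Real.log_le_log (Real.rpow_pos_of_pos hN0 _) hlen
        rwa [Real.log_rpow hN0] at h1
      have h1 : Real.log (Real.log N) ≤ 1/s + Real.log (Real.log N₁) := by
        have hpos : 0 < Real.exp (-(1/s)) * Real.log N := by positivity
        have heq : Real.log N = Real.exp (1/s) * (Real.exp (-(1/s)) * Real.log N) := by
          rw [← mul_assoc, ← Real.exp_add]
          simp
        calc Real.log (Real.log N)
            = Real.log (Real.exp (1/s)) + Real.log (Real.exp (-(1/s)) * Real.log N) := by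
              rw [← Real.log_mul (Real.exp_ne_zero _) (ne_of_gt hpos), ← heq]
          _ = 1/s + Real.log (Real.exp (-(1/s)) * Real.log N) := by rw [Real.log_exp]
          _ ≤ 1/s + Real.log (Real.log N₁) :=
              add_le_add le_rfl (Real.log_le_log hpos hlogN₁)
      have h3 : (2 - δ₁) / (c * δ₁ ^ C) ^ 2 ≤
          (2 - (δ + s)) / (c * (δ + s) ^ C) ^ 2 :=
        mono_aux hc hC (by linarith) hδ₁lb hδ₁1
      have h4 : 1/s + (2 - (δ + s)) / (c * (δ + s) ^ C) ^ 2 ≤ (2 - δ) / s ^ 2 := by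
        have hδsC : δ ^ C ≤ (δ + s) ^ C :=
          Real.rpow_le_rpow hδ.le (by linarith) (by linarith)
        have hd1 : s ≤ c * (δ + s) ^ C := by
          rw [hs_def]
          exact mul_le_mul_of_nonneg_left hδsC hc.le
        have hd2 : s ^ 2 ≤ (c * (δ + s) ^ C) ^ 2 := by nlinarith
        have h5 : (2 - (δ + s)) / (c * (δ + s) ^ C) ^ 2 ≤ (2 - (δ + s)) / s ^ 2 :=
          div_le_div_of_nonneg_left (by linarith) (by positivity) hd2
        have h6 : 1/s + (2 - (δ + s)) / s ^ 2 = (2 - δ) / s ^ 2 := by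
          field_simp
          ring
        linarith
      linarith
    · push_neg at hbig
      have hlog1 : Real.log N ≤ Real.exp (1/s) :=
        log_le_of_le_exp' (by positivity) (Real.exp_nonneg _) hbig.le
      have hlog2 : Real.log (Real.log N) ≤ 1/s := by
        apply log_le_of_le_exp' ?_ (by positivity) hlog1
        rcases Nat.eq_zero_or_pos N with h | h
        · simp [h]
        · have : (1:ℝ) ≤ N := by exact_mod_cast h
          exact Real.log_nonneg this
      have : 1/s ≤ (2 - δ) / s ^ 2 := by
        rw [div_le_div_iff₀ hs (by positivity)]
        nlinarith
      linarith

set_option maxHeartbeats 2000000 in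
/-- From the density increment lemma to the final bound: if every
configuration-free `A ⊆ [N]` of density `δ` (with `N ≥ exp exp (1/(cδ^C))`)
has a density increment `δ + cδ^C` on a `k`-th power progression of length at
least `N^{exp(-1/(cδ^C))}` contained in `[N]`, then every configuration-free
`A ⊆ [N]` (for `N ≥ 3`) satisfies `|A| ≤ K·N·(log log N)^{-1/C'}`. -/
theorem increment_implies_bound (n k : ℕ) (hk : 1 ≤ k)
    (cs : Fin n → ℤ) (hcs : ∀ i, cs i ≠ 0)
    (c C : ℝ) (hc : 0 < c) (hc1 : c ≤ 1) (hC : 1 ≤ C)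
    (hinc : ∀ (N : ℕ) (A : Finset ℤ) (δ : ℝ), 0 < δ → δ ≤ 1 →
      (A : Set ℤ) ⊆ Set.Icc (1 : ℤ) N → (A.card : ℝ) = δ * N →
      (¬∃ (x y : ℤ), y ≠ 0 ∧ x ∈ A ∧ ∀ i, x + cs i * y ^ k ∈ A) →
      Real.exp (Real.exp (1 / (c * δ ^ C))) ≤ (N : ℝ) →
      ∃ (a : ℤ) (q N₁ : ℕ), 1 ≤ q ∧ 1 ≤ N₁ ∧
        (∀ z ∈ Finset.Icc (1 : ℤ) (N₁ : ℤ),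
          a + (q : ℤ) ^ k * z ∈ Finset.Icc (1 : ℤ) (N : ℤ)) ∧
        (N : ℝ) ^ Real.exp (-(1 / (c * δ ^ C))) ≤ (N₁ : ℝ) ∧
        (δ + c * δ ^ C) * (N₁ : ℝ) ≤
          ((A ∩ (Finset.Icc (1 : ℤ) (N₁ : ℤ)).image
            (fun z => a + (q : ℤ) ^ k * z)).card : ℝ)) :
    ∃ K C' : ℝ, 0 < K ∧ 0 < C' ∧
      ∀ N : ℕ, 3 ≤ N → ∀ A : Finset ℤ, (A : Set ℤ) ⊆ Set.Icc (1 : ℤ) N →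
        (¬∃ (x y : ℤ), y ≠ 0 ∧ x ∈ A ∧ ∀ i, x + cs i * y ^ k ∈ A) →
        (A.card : ℝ) ≤ K * N * Real.log (Real.log N) ^ (-(1 / C')) := by
  refine ⟨(Real.sqrt 2 / c) ^ (1/C : ℝ), 2 * C, by positivity, by linarith, ?_⟩
  intro N hN A hsub hfree
  set K : ℝ := (Real.sqrt 2 / c) ^ (1/C : ℝ) with hK_def
  have hKpos : 0 < K := by positivity
  have hN0 : (0:ℝ) < N := by positivity
  have hlog3 : (1:ℝ) < Real.log 3 := by
    rw [show (1:ℝ) = Real.log (Real.exp 1) by rw [Real.log_exp]]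
    apply Real.log_lt_log (Real.exp_pos 1)
    have := Real.exp_one_lt_d9
    linarith
  have hlogN1 : (1:ℝ) < Real.log N := by
    apply lt_of_lt_of_le hlog3
    apply Real.log_le_log (by norm_num)
    exact_mod_cast hN
  set L : ℝ := Real.log (Real.log N) with hL_def
  have hLpos : 0 < L := Real.log_pos hlogN1
  rcases Nat.eq_zero_or_pos A.card with hA0 | hApos
  · rw [hA0]
    push_cast
    positivity
  set δ : ℝ := (A.card : ℝ) / N with hδ_def
  have hδpos : 0 < δ := by
    apply div_pos _ hN0
    exact_mod_cast hApos
  have hAN : A.card ≤ N := subset_card_le hsub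
  have hδ1 : δ ≤ 1 := by
    rw [hδ_def, div_le_one hN0]
    exact_mod_cast hAN
  have hcard : (A.card : ℝ) = δ * N := by
    rw [hδ_def, div_mul_cancel₀ _ hN0.ne']
  have hkey := key_lemma_s15 n k cs c C hc hc1 hC hinc (N*N+N-A.card) N A δ le_rfl
    hδpos hδ1 hsub hcard hfree
  set s : ℝ := c * δ ^ C with hs_def
  have hs : 0 < s := mul_pos hc (Real.rpow_pos_of_pos hδpos C)
  have hL2 : L ≤ 2 / s ^ 2 := by
    have h7 : (2 - δ) / s ^ 2 ≤ 2 / s ^ 2 := by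
      apply div_le_div_of_nonneg_right (by linarith) (sq_nonneg s)
    linarith [hkey]
  have hs2L : s ^ 2 ≤ 2 / L := by
    rw [le_div_iff₀ hLpos]
    rw [le_div_iff₀ (pow_pos hs 2 : (0:ℝ) < s ^ 2)] at hL2
    linarith
  have hssqrt : s ≤ Real.sqrt (2 / L) := (Real.le_sqrt hs.le (by positivity)).mpr hs2L
  have hsqrt_eq : Real.sqrt (2 / L) / c = (Real.sqrt 2 / c) * L ^ (-(1/2) : ℝ) := by
    rw [Real.sqrt_div (by norm_num : (0:ℝ) ≤ 2) L, Real.sqrt_eq_rpow L,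
      Real.rpow_neg hLpos.le]
    field_simp
  have hδC : δ ^ C ≤ Real.sqrt (2 / L) / c := by
    rw [le_div_iff₀ hc]
    calc δ ^ C * c = s := by rw [hs_def]; ring
    _ ≤ Real.sqrt (2 / L) := hssqrt
  have hδeq : δ = (δ ^ C) ^ (1/C : ℝ) := by
    rw [← Real.rpow_mul hδpos.le]
    rw [mul_one_div, div_self (by linarith : C ≠ 0), Real.rpow_one]
  have hδle : δ ≤ K * L ^ (-(1/(2*C)) : ℝ) := by
    calc δ = (δ ^ C) ^ (1/C : ℝ) := hδeq
    _ ≤ (Real.sqrt (2 / L) / c) ^ (1/C : ℝ) := by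
        apply Real.rpow_le_rpow (Real.rpow_nonneg hδpos.le C) hδC (one_div_nonneg.mpr (by linarith))
    _ = ((Real.sqrt 2 / c) * L ^ (-(1/2) : ℝ)) ^ (1/C : ℝ) := by rw [hsqrt_eq]
    _ = K * (L ^ (-(1/2) : ℝ)) ^ (1/C : ℝ) := by
        rw [Real.mul_rpow (by positivity) (by positivity), hK_def]
    _ = K * L ^ (-(1/(2*C)) : ℝ) := by
        rw [← Real.rpow_mul hLpos.le]
        congr 1
        field_simp
  have hCC : -(1/(2*C)) = -(1/(2*C)) := rfl
  calc (A.card : ℝ) = δ * N := hcard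
  _ ≤ (K * L ^ (-(1/(2*C)) : ℝ)) * N := by
      apply mul_le_mul_of_nonneg_right hδle hN0.le
  _ = K * N * L ^ (-(1/(2*C)) : ℝ) := by ring
end
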